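/- Let $t_1, t_2 \in [0,1]$ and let $T$ be a strict Schur-concave t-norm with additive generator $g$, with residuum $R(t_1, t_2) = \sup\{z : T(t_1, z) \le t_2\} = g^{-1}(\max(g(t_2) - g(t_1), 0))$. For a target $0 < \hat{t} \in [R(t_1, t_2), 1]$ at which $R$ is strictly cone-increasing, the vector $[t_1, g^{-1}(g(\hat{t}) + g(t_1))]$ is a minimal refined vector for $R$ under the $L_1$ norm. -/

import Mathlib

open Set
open scoped ENNReal

/-- `F` is strictly cone-increasing at `x`. -/
def StrictlyConeIncreasingAt {n : ℕ} (F : (Fin n → ℝ) → ℝ) (x : Fin n → ℝ) : Prop :=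
  ∃ K : Set (Fin n → ℝ), K.Nonempty ∧
    (∀ s : ℝ, 0 < s → ∀ v ∈ K, s • v ∈ Icc (0 : Fin n → ℝ) 1 → s • v ∈ K) ∧
    ∀ x' : Fin n → ℝ, x' - x ∈ K → F x < F x'

theorem residuum_L1_minimal_refined_vector
    (g : ℝ → ℝ≥0∞) (ginv : ℝ≥0∞ → ℝ)
    (hganti : StrictAntiOn g (Icc (0 : ℝ) 1)) (hg1 : g 1 = 0) (hg0 : g 0 = ⊤)
    (hgcont : ContinuousOn g (Icc (0 : ℝ) 1))
    (hginv_g : ∀ x ∈ Icc (0 : ℝ) 1, ginv (g x) = x)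
    (hg_ginv : ∀ y : ℝ≥0∞, g (ginv y) = y ∧ ginv y ∈ Icc (0 : ℝ) 1)
    (hschur : ∀ a ∈ Icc (0 : ℝ) 1, ∀ b ∈ Icc (0 : ℝ) 1, ∀ a' ∈ Icc (0 : ℝ) 1,
      ∀ b' ∈ Icc (0 : ℝ) 1, a + b = a' + b' → max a' b' ≤ max a b →
        ginv (g a + g b) ≤ ginv (g a' + g b'))
    (R : ℝ → ℝ → ℝ) (hR : ∀ a b, R a b = ginv (g b - g a))
    (t₁ t₂ : ℝ) (ht₁ : t₁ ∈ Icc (0 : ℝ) 1) (ht₂ : t₂ ∈ Icc (0 : ℝ) 1)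
    (that : ℝ) (hpos : 0 < that) (hlow : R t₁ t₂ ≤ that) (hhigh : that ≤ 1)
    (hcone : ∀ a ∈ Icc (0 : ℝ) 1, ∀ b ∈ Icc (0 : ℝ) 1, R a b = that →
      StrictlyConeIncreasingAt (fun p : Fin 2 → ℝ => R (1 - p 0) (p 1)) ![1 - a, b]) :
    R t₁ (ginv (g that + g t₁)) = that ∧
    ∀ w₁ ∈ Icc (0 : ℝ) 1, ∀ w₂ ∈ Icc (0 : ℝ) 1, R w₁ w₂ = that →
      |t₁ - t₁| + |ginv (g that + g t₁) - t₂| ≤ |w₁ - t₁| + |w₂ - t₂| := by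
  have h0mem : (0 : ℝ) ∈ Icc (0 : ℝ) 1 := ⟨le_refl 0, zero_le_one⟩
  have h1mem : (1 : ℝ) ∈ Icc (0 : ℝ) 1 := ⟨zero_le_one, le_refl 1⟩
  have hthat_mem : that ∈ Icc (0 : ℝ) 1 := ⟨hpos.le, hhigh⟩
  have hgg : ∀ y, g (ginv y) = y := fun y => (hg_ginv y).1
  have hmemi : ∀ y, ginv y ∈ Icc (0 : ℝ) 1 := fun y => (hg_ginv y).2
  have hantiOn : AntitoneOn g (Icc (0 : ℝ) 1) := hganti.antitoneOn
  have hle : ∀ a ∈ Icc (0 : ℝ) 1, ∀ b ∈ Icc (0 : ℝ) 1, g a ≤ g b → b ≤ a := by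
    intro a ha b hb h
    by_contra hc
    exact absurd h (not_le.mpr (hganti ha hb (not_le.mp hc)))
  have hginv0 : ginv 0 = 1 := by rw [← hg1, hginv_g 1 h1mem]
  set w : ℝ := ginv (g that + g t₁) with hw_def
  have hw_mem : w ∈ Icc (0 : ℝ) 1 := hmemi _
  have hgw : g w = g that + g t₁ := hgg _
  -- Part 1
  have part1 : R t₁ w = that := by
    rcases eq_or_lt_of_le ht₁.1 with h0 | ht₁pos
    · -- t₁ = 0, so that = 1
      have hthat1 : that = 1 := by
        refine le_antisymm hhigh ?_
        calc (1 : ℝ) = R t₁ t₂ := by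
              rw [hR, ← h0, hg0, ENNReal.sub_top, hginv0]
          _ ≤ that := hlow
      rw [hR, hgw, ← h0, hg0, ENNReal.sub_top, hginv0, hthat1]
    · have hgt₁ : g t₁ ≠ ⊤ := by
        have := hganti h0mem ht₁ ht₁pos
        rw [hg0] at this
        exact this.ne
      rw [hR, hgw, ENNReal.add_sub_cancel_right hgt₁, hginv_g that hthat_mem]
  refine ⟨part1, ?_⟩
  -- that < 1
  have hthat1 : that < 1 := by
    rcases lt_or_eq_of_le hhigh with h | h
    · exact h
    · exfalso
      obtain ⟨K, ⟨v, hv⟩, _, hKlt⟩ := hcone t₁ ht₁ w hw_mem part1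
      have hx' := hKlt (![1 - t₁, w] + v) (by rw [add_sub_cancel_left]; exact hv)
      simp only [Matrix.cons_val_zero, Matrix.cons_val_one, Matrix.head_cons] at hx'
      have h1 : (1 : ℝ) - (1 - t₁) = t₁ := by ring
      rw [h1, part1, h] at hx'
      have : R (1 - (![1 - t₁, w] + v) 0) ((![1 - t₁, w] + v) 1) ≤ 1 := by
        rw [hR]; exact (hmemi _).2
      linarith
  have ht₁pos : 0 < t₁ := by
    rcases eq_or_lt_of_le ht₁.1 with h0 | h; swap; · exact h
    exfalso
    have : (1 : ℝ) ≤ that := by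
      calc (1 : ℝ) = R t₁ t₂ := by rw [hR, ← h0, hg0, ENNReal.sub_top, hginv0]
        _ ≤ that := hlow
    linarith
  have hgt₁ : g t₁ ≠ ⊤ := by
    have := hganti h0mem ht₁ ht₁pos
    rw [hg0] at this
    exact this.ne
  have hgthat_pos : 0 < g that := by
    have := hganti hthat_mem h1mem hthat1
    rw [hg1] at this
    exact this
  -- g that ≤ g t₂ - g t₁, hence t₂ ≤ w
  have hkey : g that ≤ g t₂ - g t₁ := by
    have hlow' : ginv (g t₂ - g t₁) ≤ that := by rw [← hR]; exact hlow
    have := hantiOn (hmemi (g t₂ - g t₁)) hthat_mem hlow'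
    rwa [hgg] at this
  have hg12 : g t₁ ≤ g t₂ := by
    by_contra hc
    rw [tsub_eq_zero_of_le (not_le.mp hc).le] at hkey
    exact absurd hkey (not_le.mpr hgthat_pos)
  have ht₂w : t₂ ≤ w := by
    refine hle w hw_mem t₂ ht₂ ?_
    calc g w = g that + g t₁ := hgw
      _ ≤ (g t₂ - g t₁) + g t₁ := add_le_add_left hkey _
      _ = g t₂ := tsub_add_cancel_of_le hg12
  -- Part 2
  intro w₁ hw₁ w₂ hw₂ hRw
  have hcw : g w₂ - g w₁ = g that := by
    rw [hR] at hRw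
    calc g w₂ - g w₁ = g (ginv (g w₂ - g w₁)) := (hgg _).symm
      _ = g that := by rw [hRw]
  have hw₁pos : 0 < w₁ := by
    rcases eq_or_lt_of_le hw₁.1 with h0 | h; swap; · exact h
    exfalso
    rw [← h0, hg0, ENNReal.sub_top] at hcw
    exact absurd hcw.symm (ne_of_gt hgthat_pos)
  have hgw₁ : g w₁ ≠ ⊤ := by
    have := hganti h0mem hw₁ hw₁pos
    rw [hg0] at this
    exact this.ne
  have hw₁₂ : g w₁ ≤ g w₂ := by
    by_contra hc
    rw [tsub_eq_zero_of_le (not_le.mp hc).le] at hcw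
    exact absurd hcw.symm (ne_of_gt hgthat_pos)
  have hcw' : g w₂ = g that + g w₁ := by
    rw [← hcw, tsub_add_cancel_of_le hw₁₂]
  rw [sub_self, abs_zero, zero_add, abs_of_nonneg (sub_nonneg.mpr ht₂w)]
  rcases le_or_gt t₁ w₁ with hcase | hcase
  · -- w₁ ≥ t₁ : then w ≤ w₂
    have hww₂ : w ≤ w₂ := by
      refine hle w₂ hw₂ w hw_mem ?_
      rw [hcw', hgw]
      exact add_le_add_right (hantiOn ht₁ hw₁ hcase) _
    have h1 := abs_nonneg (w₁ - t₁)
    have h2 := le_abs_self (w₂ - t₂)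
    linarith
  · -- w₁ < t₁ : Schur concavity
    have hw₂w₁ : w₂ ≤ w₁ := by
      refine hle w₁ hw₁ w₂ hw₂ ?_
      rw [hcw']
      exact le_add_self
    have hmem' : w₂ + (t₁ - w₁) ∈ Icc (0 : ℝ) 1 := by
      constructor
      · have := hw₂.1; linarith
      · have := ht₁.2; linarith
    have hs := hschur t₁ ht₁ w₂ hw₂ w₁ hw₁ (w₂ + (t₁ - w₁)) hmem' (by ring)
      (by
        apply max_le
        · exact le_max_of_le_left hcase.le
        · exact le_max_of_le_left (by linarith))
    have heq : g t₁ + g w₂ = g w₁ + g w := by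
      rw [hcw', hgw]
      ring
    rw [heq] at hs
    have hs' := hantiOn (hmemi (g w₁ + g w)) (hmemi (g w₁ + g (w₂ + (t₁ - w₁)))) hs
    rw [hgg, hgg] at hs'
    have hcancel : g (w₂ + (t₁ - w₁)) ≤ g w :=
      (ENNReal.add_le_add_iff_left hgw₁).mp hs'
    have hww : w ≤ w₂ + (t₁ - w₁) := hle _ hmem' w hw_mem hcancel
    have h1 : |w₁ - t₁| = t₁ - w₁ := by
      rw [abs_sub_comm]; exact abs_of_nonneg (by linarith)
    have h2 := le_abs_self (w₂ - t₂)
    linarith
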